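/- Let N be a smooth manifold and {·,·} a Jacobi bracket on C^∞(N,ℝ). For a ∈ C^∞(N,ℝ) define the hamiltonian operator X_a : C^∞(N,ℝ) → C^∞(N,ℝ) by X_a(g) := {a,g} + g·{1,a}. Then: (i) each X_a is an ℝ-linear derivation of the ring C^∞(N,ℝ) (a vector field); and (ii) X_{{a,b}} = X_a∘X_b − X_b∘X_a for all a,b ∈ C^∞(N,ℝ). In particular, a ↦ −X_a is a Lie algebra antihomomorphism from (C^∞(N,ℝ), {·,·}) to the Lie algebra of derivations of C^∞(N,ℝ) with the commutator bracket. -/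

import Mathlib

open scoped Manifold

/-- A Jacobi bracket on the smooth functions (those satisfying the predicate `S`)
of a space `N`: an ℝ-bilinear antisymmetric bracket satisfying the Jacobi identity
and the generalized Leibniz rule. -/
structure JacobiBracket (N : Type*) (S : (N → ℝ) → Prop) where
  br : (N → ℝ) → (N → ℝ) → N → ℝ
  smooth_br : ∀ f g, S f → S g → S (br f g)
  add_left : ∀ f g h, S f → S g → S h → br (f + g) h = br f h + br g h
  smul_left : ∀ (c : ℝ) (f g : N → ℝ), S f → S g → br (c • f) g = c • br f g
  antisymm : ∀ f g, S f → S g → br f g = -br g f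
  jacobi : ∀ f g h, S f → S g → S h →
    br f (br g h) + br g (br h f) + br h (br f g) = 0
  leibniz : ∀ f g h, S f → S g → S h →
    br f (g * h) = br f g * h + g * br f h - g * h * br f 1

/-- for a Jacobi bracket on `C^∞(N,ℝ)`, the hamiltonian operator
`X_a(g) = {a,g} + g·{1,a}` of each `a` is an ℝ-linear derivation of `C^∞(N,ℝ)`
(a vector field), and `X_{{a,b}} = X_a∘X_b − X_b∘X_a`; in particular `a ↦ −X_a` is a
Lie algebra antihomomorphism into the derivations with the commutator bracket. -/
theorem stmt15
    {EN : Type*} [NormedAddCommGroup EN] [NormedSpace ℝ EN] [FiniteDimensional ℝ EN]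
    {HN : Type*} [TopologicalSpace HN] (IN : ModelWithCorners ℝ EN HN)
    (N : Type*) [TopologicalSpace N] [ChartedSpace HN N] [IsManifold IN (⊤ : ℕ∞) N]
    (S : (N → ℝ) → Prop) (hS : S = fun f => ContMDiff IN 𝓘(ℝ, ℝ) (⊤ : ℕ∞) f)
    (J : JacobiBracket N S)
    (X : (N → ℝ) → (N → ℝ) → N → ℝ)
    (hX : X = fun a g x => J.br a g x + g x * J.br 1 a x) :
    -- (i) each X_a is an ℝ-linear derivation of C^∞(N,ℝ)
    (∀ a, S a →
      (∀ g, S g → S (X a g)) ∧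
      (∀ g h, S g → S h → X a (g + h) = X a g + X a h) ∧
      (∀ (r : ℝ) (g : N → ℝ), S g → X a (r • g) = r • X a g) ∧
      (∀ g h, S g → S h → X a (g * h) = X a g * h + g * X a h)) ∧
    -- (ii) X_{{a,b}} = X_a ∘ X_b − X_b ∘ X_a
    (∀ a b g, S a → S b → S g →
      X (J.br a b) g = X a (X b g) - X b (X a g)) := by
  have hone : S 1 := by rw [hS]; exact contMDiff_const
  have hadd : ∀ f g, S f → S g → S (f + g) := by
    simp only [hS]; intro f g hf hg; exact hf.add hg
  have hmul : ∀ f g, S f → S g → S (f * g) := by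
    simp only [hS]; intro f g hf hg; exact hf.mul hg
  have hsmul : ∀ (r : ℝ) (f : N → ℝ), S f → S (r • f) := by
    simp only [hS]; intro r f hf
    exact (contMDiff_const (c := r)).mul hf
  have hneg : ∀ f, S f → S (-f) := by
    intro f hf
    have := hsmul (-1) f hf
    simpa using this
  have add_right : ∀ f g h, S f → S g → S h → J.br f (g + h) = J.br f g + J.br f h := by
    intro f g h hf hg hh
    rw [J.antisymm f (g + h) hf (hadd g h hg hh), J.add_left g h f hg hh hf,
      J.antisymm g f hg hf, J.antisymm h f hh hf]
    ring
  have smul_right : ∀ (r : ℝ) (f g : N → ℝ), S f → S g → J.br f (r • g) = r • J.br f g := by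
    intro r f g hf hg
    rw [J.antisymm f (r • g) hf (hsmul r g hg), J.smul_left r g f hg hf,
      J.antisymm g f hg hf]
    simp
  have neg_right : ∀ f g, S f → S g → J.br f (-g) = -J.br f g := by
    intro f g hf hg
    have := smul_right (-1) f g hf hg
    simpa using this
  have hXfun : ∀ b g, X b g = J.br b g + g * J.br 1 b := by
    subst hX; intro b g; rfl
  have hSX : ∀ a g, S a → S g → S (X a g) := by
    intro a g ha hg
    rw [hXfun]
    exact hadd _ _ (J.smooth_br a g ha hg) (hmul _ _ hg (J.smooth_br 1 a hone ha))
  constructor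
  · intro a ha
    refine ⟨fun g hg => hSX a g ha hg, ?_, ?_, ?_⟩
    · intro g h hg hh
      rw [hXfun, hXfun, hXfun, add_right a g h ha hg hh]
      ring
    · intro r g hg
      rw [hXfun, hXfun, smul_right r a g ha hg]
      funext x
      simp [mul_comm, mul_left_comm]
      ring
    · intro g h hg hh
      rw [hXfun, hXfun, hXfun, J.leibniz a g h ha hg hh, J.antisymm a 1 ha hone]
      ring
  · intro a b g ha hb hg
    have hbg := J.smooth_br b g hb hg
    have hag := J.smooth_br a g ha hg
    have h1b := J.smooth_br 1 b hone hb
    have h1a := J.smooth_br 1 a hone ha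
    have hab := J.smooth_br a b ha hb
    -- expand X a (X b g)
    have expand : ∀ a b, S a → S b →
        X a (X b g) = J.br a (J.br b g) + (J.br a g * J.br 1 b + g * J.br a (J.br 1 b)
          + g * J.br 1 b * J.br 1 a) + (J.br b g + g * J.br 1 b) * J.br 1 a := by
      intro a b ha hb
      have h1b := J.smooth_br 1 b hone hb
      have hbg := J.smooth_br b g hb hg
      rw [hXfun, hXfun, add_right a (J.br b g) (g * J.br 1 b) ha hbg (hmul _ _ hg h1b),
        J.leibniz a g (J.br 1 b) ha hg h1b, J.antisymm a 1 ha hone]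
      ring
    rw [hXfun, expand a b ha hb, expand b a hb ha]
    -- Jacobi identities, rewritten
    have jac1 : J.br a (J.br b g) - J.br b (J.br a g) - J.br (J.br a b) g = 0 := by
      have := J.jacobi a b g ha hb hg
      rw [J.antisymm g a hg ha, neg_right b (J.br a g) hb hag,
        J.antisymm g (J.br a b) hg hab] at this
      linear_combination this
    have jac2 : J.br 1 (J.br a b) - J.br a (J.br 1 b) + J.br b (J.br 1 a) = 0 := by
      have := J.jacobi (1 : N → ℝ) a b hone ha hb
      rw [J.antisymm b 1 hb hone, neg_right a (J.br 1 b) ha h1b] at this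
      linear_combination this
    funext x
    have j1 := congrFun jac1 x
    have j2 := congrFun jac2 x
    simp only [Pi.add_apply, Pi.mul_apply, Pi.sub_apply, Pi.neg_apply, Pi.zero_apply] at j1 j2 ⊢
    linear_combination -j1 + g x * j2
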